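/- arXiv:2209.11006 — 3 statements merged into one kernel-verified Lean document; each statement's English description precedes it below -/
import Mathlib

section
/- For any one-dimensional set of finite perimeter E ⊆ R and any nonnegative even kernel ρ_ε on R with 2∫_0^∞ t ρ_ε(t) dt = 1, the one-dimensional nonlocal perimeter satisfies P_ε^{1D}(E;R) := 2∬_{E×Eᶜ} ρ_ε(s−t) ds dt ≤ H^0(∂* E). Consequently the one-dimensional deficit F_ε^{1D}(E;R) := H^0(∂*E) − P_ε^{1D}(E;R) is nonnegative. -/
open MeasureTheory ENNReal

lemma exists_frontier_uIcc' {E : Set ℝ} {a b : ℝ} (ha : a ∈ E) (hb : b ∉ E) :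
    ∃ c ∈ frontier E, c ∈ Set.uIcc a b := by
  by_contra h
  push_neg at h
  have hsub : Set.uIcc a b ⊆ interior E ∪ (closure E)ᶜ := by
    intro x hx
    by_cases hc : x ∈ closure E
    · left
      by_contra hi
      exact h x ⟨hc, hi⟩ hx
    · right; exact hc
  have hdisj : Disjoint (interior E) (closure E)ᶜ :=
    Set.disjoint_compl_right_iff_subset.2 (interior_subset.trans subset_closure)
  rcases isPreconnected_uIcc.subset_or_subset isOpen_interior isClosed_closure.isOpen_compl
      hdisj hsub with h1 | h2
  · exact hb (interior_subset (h1 Set.right_mem_uIcc))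
  · exact (h2 Set.left_mem_uIcc) (subset_closure ha)

lemma symmDiff_vol_bound {E : Set ℝ} (hE : MeasurableSet E) (hfr : (frontier E).Finite)
    (h : ℝ) :
    volume {s : ℝ | s ∈ E ∧ s - h ∉ E} + volume {s : ℝ | s ∉ E ∧ s - h ∈ E}
      ≤ ((frontier E).ncard : ℝ≥0∞) * ENNReal.ofReal |h| := by
  have hm1 : MeasurableSet {s : ℝ | s ∈ E ∧ s - h ∉ E} :=
    hE.inter ((hE.compl).preimage (measurable_id.sub_const h))
  have hm2 : MeasurableSet {s : ℝ | s ∉ E ∧ s - h ∈ E} :=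
    hE.compl.inter (hE.preimage (measurable_id.sub_const h))
  have hdisj : Disjoint {s : ℝ | s ∈ E ∧ s - h ∉ E} {s : ℝ | s ∉ E ∧ s - h ∈ E} := by
    rw [Set.disjoint_left]; rintro s ⟨h1, _⟩ ⟨h2, _⟩; exact h2 h1
  rw [← measure_union hdisj hm2]
  have hsub : {s : ℝ | s ∈ E ∧ s - h ∉ E} ∪ {s : ℝ | s ∉ E ∧ s - h ∈ E}
      ⊆ ⋃ c ∈ hfr.toFinset, Set.uIcc c (c + h) := by
    rintro s (⟨h1, h2⟩ | ⟨h1, h2⟩)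
    · obtain ⟨c, hc, hcs⟩ := exists_frontier_uIcc' h1 h2
      refine Set.mem_biUnion (hfr.mem_toFinset.2 hc) ?_
      rcases Set.mem_uIcc.1 hcs with ⟨ha, hb⟩ | ⟨ha, hb⟩
      · exact Set.mem_uIcc.2 (Or.inr ⟨by linarith, by linarith⟩)
      · exact Set.mem_uIcc.2 (Or.inl ⟨by linarith, by linarith⟩)
    · obtain ⟨c, hc, hcs⟩ := exists_frontier_uIcc' h2 h1
      refine Set.mem_biUnion (hfr.mem_toFinset.2 hc) ?_
      rcases Set.mem_uIcc.1 hcs with ⟨ha, hb⟩ | ⟨ha, hb⟩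
      · exact Set.mem_uIcc.2 (Or.inl ⟨by linarith, by linarith⟩)
      · exact Set.mem_uIcc.2 (Or.inr ⟨by linarith, by linarith⟩)
  calc volume ({s : ℝ | s ∈ E ∧ s - h ∉ E} ∪ {s : ℝ | s ∉ E ∧ s - h ∈ E})
      ≤ volume (⋃ c ∈ hfr.toFinset, Set.uIcc c (c + h)) := measure_mono hsub
    _ ≤ ∑ c ∈ hfr.toFinset, volume (Set.uIcc c (c + h)) := measure_biUnion_finset_le _ _
    _ = ∑ c ∈ hfr.toFinset, ENNReal.ofReal |h| := by
        refine Finset.sum_congr rfl fun c _ => ?_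
        rw [Real.volume_interval]; ring_nf
    _ = ((frontier E).ncard : ℝ≥0∞) * ENNReal.ofReal |h| := by
        rw [Finset.sum_const, Set.ncard_eq_toFinset_card _ hfr, nsmul_eq_mul]

/-- For a one-dimensional set of finite perimeter `E ⊆ ℝ` (finitely many boundary points)
    and an even nonnegative kernel `ρ_ε` with `2∫_0^∞ t ρ_ε(t) dt = 1`, the one-dimensional
    nonlocal perimeter satisfies `P_ε^{1D}(E;ℝ) = 2∬_{E×Eᶜ} ρ_ε(s-t) ≤ H⁰(∂E)`. -/
theorem oneD_nonlocal_perimeter_le {E : Set ℝ} (hE : MeasurableSet E)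
    (hfr : (frontier E).Finite)
    (ρ : ℝ → ℝ≥0∞) (hρmeas : Measurable ρ) (hρeven : ∀ t, ρ (-t) = ρ t)
    (hρnorm : 2 * ∫⁻ t in Set.Ioi (0 : ℝ), ENNReal.ofReal t * ρ t = 1) :
    2 * ∫⁻ s in E, ∫⁻ t in Eᶜ, ρ (s - t) ≤ ((frontier E).ncard : ℝ≥0∞) := by
  classical
  set n : ℝ≥0∞ := ((frontier E).ncard : ℝ≥0∞) with hn
  set f : ℝ → ℝ≥0∞ := fun h => volume {s : ℝ | s ∈ E ∧ s - h ∉ E} with hf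
  have hTm : ∀ h : ℝ, MeasurableSet {s : ℝ | s ∈ E ∧ s - h ∉ E} := fun h =>
    hE.inter ((hE.compl).preimage (measurable_id.sub_const h))
  set K : ℝ → ℝ → ℝ≥0∞ := fun h s => if s ∈ E ∧ s - h ∉ E then ρ h else 0 with hK
  have hKm : Measurable (fun p : ℝ × ℝ => K p.2 p.1) := by
    have hT2 : MeasurableSet {p : ℝ × ℝ | p.1 ∈ E ∧ p.1 - p.2 ∉ E} :=
      (hE.preimage measurable_fst).inter
        ((hE.compl).preimage (measurable_fst.sub measurable_snd))
    have : (fun p : ℝ × ℝ => K p.2 p.1)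
        = Set.indicator {p : ℝ × ℝ | p.1 ∈ E ∧ p.1 - p.2 ∉ E} (fun p => ρ p.2) := by
      funext p
      simp only [hK, Set.indicator_apply, Set.mem_setOf_eq]
    rw [this]
    exact (hρmeas.comp measurable_snd).indicator hT2
  -- measurability of f
  have hfm : Measurable f := by
    have h1 : Measurable (fun p : ℝ × ℝ =>
        Set.indicator {p : ℝ × ℝ | p.2 ∈ E ∧ p.2 - p.1 ∉ E} (fun _ => (1 : ℝ≥0∞)) p) :=
      measurable_const.indicator ((hE.preimage measurable_snd).inter
        ((hE.compl).preimage (measurable_snd.sub measurable_fst)))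
    have h2 := Measurable.lintegral_prod_right' (ν := (volume : Measure ℝ)) h1
    have heq : f = fun h => ∫⁻ s,
        Set.indicator {p : ℝ × ℝ | p.2 ∈ E ∧ p.2 - p.1 ∉ E} (fun _ => (1 : ℝ≥0∞)) (h, s) := by
      funext h
      have : (fun s => Set.indicator {p : ℝ × ℝ | p.2 ∈ E ∧ p.2 - p.1 ∉ E}
          (fun _ => (1 : ℝ≥0∞)) (h, s))
          = Set.indicator {s : ℝ | s ∈ E ∧ s - h ∉ E} (fun _ => (1 : ℝ≥0∞)) := by
        funext s
        simp only [Set.indicator_apply, Set.mem_setOf_eq]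
      rw [this]; exact (lintegral_indicator_one (hTm h)).symm
    rw [heq]; exact h2
  -- Step 1: change of variables and Tonelli
  have step1 : ∫⁻ s in E, ∫⁻ t in Eᶜ, ρ (s - t) = ∫⁻ h, ρ h * f h := by
    have inner : ∀ s : ℝ, (∫⁻ t in Eᶜ, ρ (s - t)) = ∫⁻ h, if s - h ∉ E then ρ h else 0 := by
      intro s
      have mp : MeasurePreserving (fun h : ℝ => s - h) volume volume :=
        Measure.measurePreserving_sub_left volume s
      have emb : MeasurableEmbedding (fun h : ℝ => s - h) :=
        (MeasurableEquiv.subLeft s).measurableEmbedding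
      have key := mp.setLIntegral_comp_preimage_emb emb (fun t => ρ (s - t)) Eᶜ
      have hms : MeasurableSet ((fun h : ℝ => s - h) ⁻¹' Eᶜ) :=
        (hE.compl).preimage (measurable_const.sub measurable_id)
      rw [← key, ← lintegral_indicator hms (fun a => ρ (s - (s - a)))]
      refine lintegral_congr fun h => ?_
      simp [Set.indicator_apply, Set.mem_preimage, _root_.sub_sub_cancel]
    calc ∫⁻ s in E, ∫⁻ t in Eᶜ, ρ (s - t)
        = ∫⁻ s, E.indicator (fun s => ∫⁻ t in Eᶜ, ρ (s - t)) s := (lintegral_indicator hE _).symm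
      _ = ∫⁻ s, ∫⁻ h, K h s := by
          refine lintegral_congr fun s => ?_
          by_cases hs : s ∈ E
          · rw [Set.indicator_of_mem hs, inner s]
            refine lintegral_congr fun h => ?_
            simp [hK, hs]
          · rw [Set.indicator_of_notMem hs]
            symm
            simp only [hK, hs, false_and, if_false]
            exact lintegral_zero
      _ = ∫⁻ h, ∫⁻ s, K h s := lintegral_lintegral_swap (μ := volume) (ν := volume) hKm.aemeasurable
      _ = ∫⁻ h, ρ h * f h := by
          refine lintegral_congr fun h => ?_
          have : (fun s => K h s)
              = Set.indicator {s : ℝ | s ∈ E ∧ s - h ∉ E} (fun _ => ρ h) := by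
            funext s; simp only [hK, Set.indicator_apply, Set.mem_setOf_eq]
          rw [this, lintegral_indicator (hTm h), setLIntegral_const]
  -- Step 2: symmetrization via evenness
  have step2 : ∫⁻ h, ρ h * f h = ∫⁻ h, ρ h * f (-h) := by
    have mp := Measure.measurePreserving_neg (volume : Measure ℝ)
    have := mp.lintegral_comp (f := fun h : ℝ => ρ h * f (-h))
      ((hρmeas.mul (hfm.comp measurable_neg)))
    simp only [neg_neg, hρeven] at this
    exact this
  -- Step 3: the symmetric difference bound (translated)
  have step3 : ∀ h : ℝ, f h + f (-h) ≤ n * ENNReal.ofReal |h| := by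
    intro h
    have hneg : f (-h) = volume {s : ℝ | s ∉ E ∧ s - h ∈ E} := by
      have h1 : {s : ℝ | s ∈ E ∧ s - -h ∉ E}
          = (fun u : ℝ => u + h) ⁻¹' {u : ℝ | u ∉ E ∧ u - h ∈ E} := by
        ext s
        simp [sub_neg_eq_add, add_sub_cancel_right, and_comm]
      have h2 : MeasurableSet {u : ℝ | u ∉ E ∧ u - h ∈ E} :=
        hE.compl.inter (hE.preimage (measurable_id.sub_const h))
      rw [hf]
      simp only [h1]
      exact (measurePreserving_add_right volume h).measure_preimage h2.nullMeasurableSet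
    rw [hneg]
    exact symmDiff_vol_bound hE hfr h
  -- Step 4: putting things together
  have habs : Measurable fun h : ℝ => ENNReal.ofReal |h| :=
    ENNReal.measurable_ofReal.comp (continuous_abs.measurable)
  have step5 : ∫⁻ h, ρ h * ENNReal.ofReal |h| = 1 := by
    have hg : Measurable fun h : ℝ => ρ h * ENNReal.ofReal |h| := hρmeas.mul habs
    have hsplit : ∫⁻ h, ρ h * ENNReal.ofReal |h|
        = (∫⁻ h in Set.Iio (0:ℝ), ρ h * ENNReal.ofReal |h|)
          + ∫⁻ h in Set.Ioi (0:ℝ), ρ h * ENNReal.ofReal |h| := by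
      rw [← setLIntegral_univ, ← lintegral_union measurableSet_Ioi
        (by
          rw [Set.disjoint_left]; intro a h1 h2; exact absurd (h1.trans h2) (lt_irrefl a))]
      refine setLIntegral_congr ?_
      rw [Set.Iio_union_Ioi]
      symm
      rw [MeasureTheory.ae_eq_univ, compl_compl]
      exact measure_singleton 0
    have hIio : ∫⁻ h in Set.Iio (0:ℝ), ρ h * ENNReal.ofReal |h|
        = ∫⁻ t in Set.Ioi (0:ℝ), ENNReal.ofReal t * ρ t := by
      have mp := Measure.measurePreserving_neg (volume : Measure ℝ)
      have emb : MeasurableEmbedding (fun x : ℝ => -x) :=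
        (MeasurableEquiv.neg ℝ).measurableEmbedding
      have key := mp.setLIntegral_comp_preimage_emb emb
        (fun h => ρ h * ENNReal.ofReal |h|) (Set.Iio (0:ℝ))
      have hpre : (fun x : ℝ => -x) ⁻¹' Set.Iio (0:ℝ) = Set.Ioi 0 := by
        ext x; simp [Set.mem_Iio, Set.mem_Ioi, neg_lt_zero]
      rw [hpre] at key
      rw [← key]
      refine setLIntegral_congr_fun measurableSet_Ioi (
        fun x hx => ?_)
      rw [hρeven, abs_neg, abs_of_pos hx, mul_comm]
    have hIoi : ∫⁻ h in Set.Ioi (0:ℝ), ρ h * ENNReal.ofReal |h|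
        = ∫⁻ t in Set.Ioi (0:ℝ), ENNReal.ofReal t * ρ t := by
      refine setLIntegral_congr_fun measurableSet_Ioi (
        fun x hx => ?_)
      rw [abs_of_pos hx, mul_comm]
    rw [hsplit, hIio, hIoi, ← two_mul, hρnorm]
  calc 2 * ∫⁻ s in E, ∫⁻ t in Eᶜ, ρ (s - t)
      = (∫⁻ h, ρ h * f h) + ∫⁻ h, ρ h * f (-h) := by
        rw [step1, two_mul]; rw [step2]
    _ = ∫⁻ h, (ρ h * f h + ρ h * f (-h)) := by
        rw [lintegral_add_left (f := fun h => ρ h * f h) (hρmeas.mul hfm)]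
    _ = ∫⁻ h, ρ h * (f h + f (-h)) := by
        refine lintegral_congr fun h => (mul_add _ _ _).symm
    _ ≤ ∫⁻ h, ρ h * (n * ENNReal.ofReal |h|) :=
        lintegral_mono fun h => mul_le_mul_right (step3 h) _
    _ = n * ∫⁻ h, ρ h * ENNReal.ofReal |h| := by
        rw [← lintegral_const_mul n (f := fun h => ρ h * ENNReal.ofReal |h|) (hρmeas.mul habs)]
        exact lintegral_congr fun h => by ring
    _ = n := by rw [step5, mul_one]
end

section
/- Let ρ : R → [0,∞) be even with 2∫_0^∞ tρ(t)dt = 1, let a > 0 and 0 < t_F < a with dist(t_F, {0,a}) ≥ δ for some δ > 0, and let F = (0, t_F) ⊆ (0,a). Then the one-dimensional energy deficit satisfies F^{1D}(F;(0,a)) := 1 − 2∫_0^{t_F}∫_{t_F}^a ρ(s−t) ds dt ≤ 4∫_δ^∞ (t−δ) ρ(t) dt. -/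
open MeasureTheory ENNReal

/-- For an even normalized kernel `ρ` and `F = (0,t_F) ⊆ (0,a)` with
    `dist(t_F, {0,a}) ≥ δ`, the one-dimensional energy deficit satisfies
    `1 - 2∫_0^{t_F}∫_{t_F}^a ρ(s-t) ds dt ≤ 4∫_δ^∞ (t-δ) ρ(t) dt`. -/
theorem oneD_deficit_far_from_boundary
    (ρ : ℝ → ℝ≥0∞) (hρmeas : Measurable ρ) (hρeven : ∀ t, ρ (-t) = ρ t)
    (hρnorm : 2 * ∫⁻ t in Set.Ioi (0 : ℝ), ENNReal.ofReal t * ρ t = 1)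
    (a tF δ : ℝ) (ha : 0 < a) (htF0 : 0 < tF) (htFa : tF < a)
    (hδ : 0 < δ) (hδ1 : δ ≤ tF) (hδ2 : δ ≤ a - tF) :
    1 - 2 * ∫⁻ t in Set.Ioo (0 : ℝ) tF, ∫⁻ s in Set.Ioo tF a, ρ (s - t) ≤
      4 * ∫⁻ t in Set.Ioi δ, ENNReal.ofReal (t - δ) * ρ t := by
  set S : Set (ℝ × ℝ) := {p | tF - p.1 < p.2 ∧ p.2 < a - p.1} with hS
  have hSmeas : MeasurableSet S := by
    apply MeasurableSet.inter
    · exact measurableSet_lt (measurable_const.sub measurable_fst) measurable_snd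
    · exact measurableSet_lt measurable_snd (measurable_const.sub measurable_fst)
  have h1 : ∀ t : ℝ, (∫⁻ s in Set.Ioo tF a, ρ (s - t)) =
      ∫⁻ u, S.indicator (fun p => ρ p.2) (t, u) := by
    intro t
    rw [← lintegral_indicator measurableSet_Ioo _]
    rw [← lintegral_add_right_eq_self (fun s => (Set.Ioo tF a).indicator (fun s => ρ (s - t)) s) t]
    apply lintegral_congr
    intro u
    have hmem : u + t ∈ Set.Ioo tF a ↔ (t, u) ∈ S := by
      simp only [Set.mem_Ioo, hS, Set.mem_setOf_eq]
      constructor <;> intro h <;> exact ⟨by linarith [h.1], by linarith [h.2]⟩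
    by_cases h : (t, u) ∈ S
    · rw [Set.indicator_of_mem (hmem.mpr h), Set.indicator_of_mem h]
      simp
    · rw [Set.indicator_of_notMem (fun hc => h (hmem.mp hc)), Set.indicator_of_notMem h]
  have h2 : (∫⁻ t in Set.Ioo (0 : ℝ) tF, ∫⁻ s in Set.Ioo tF a, ρ (s - t)) =
      ∫⁻ u, ρ u * volume (Set.Ioo (tF - u) (a - u) ∩ Set.Ioo 0 tF) := by
    simp_rw [h1]
    rw [lintegral_lintegral_swap]
    · apply lintegral_congr
      intro u
      have : ∀ t : ℝ, S.indicator (fun p => ρ p.2) (t, u) =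
          (Set.Ioo (tF - u) (a - u)).indicator (fun _ => ρ u) t := by
        intro t
        by_cases h : (t, u) ∈ S
        · rw [Set.indicator_of_mem h, Set.indicator_of_mem]
          obtain ⟨h1', h2'⟩ := h
          exact ⟨by linarith, by linarith⟩
        · rw [Set.indicator_of_notMem h, Set.indicator_of_notMem]
          intro hc
          exact h ⟨by linarith [hc.1], by linarith [hc.2]⟩
      simp_rw [this]
      rw [lintegral_indicator measurableSet_Ioo _, setLIntegral_const,
        Measure.restrict_apply measurableSet_Ioo]
    · exact ((hρmeas.comp measurable_snd).indicator hSmeas).aemeasurable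
  rw [h2, tsub_le_iff_right, ← hρnorm]
  have h3 : (∫⁻ t in Set.Ioi δ, ENNReal.ofReal (t - δ) * ρ t) =
      ∫⁻ t in Set.Ioi (0 : ℝ), ENNReal.ofReal (t - δ) * ρ t := by
    rw [← Set.Ioc_union_Ioi_eq_Ioi hδ.le,
      lintegral_union measurableSet_Ioi Set.Ioc_disjoint_Ioi_same]
    have : (∫⁻ t in Set.Ioc (0:ℝ) δ, ENNReal.ofReal (t - δ) * ρ t) = 0 := by
      rw [← lintegral_zero (μ := volume.restrict (Set.Ioc (0:ℝ) δ))]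
      apply setLIntegral_congr_fun measurableSet_Ioc
      intro t ht
      show ENNReal.ofReal (t - δ) * ρ t = 0
      rw [ENNReal.ofReal_of_nonpos (by linarith [ht.2]), zero_mul]
    rw [this, zero_add]
  rw [h3]
  set V : ℝ → ℝ≥0∞ := fun u => volume (Set.Ioo (tF - u) (a - u) ∩ Set.Ioo 0 tF) with hV
  have hVeq : V = fun u => ENNReal.ofReal (min (a - u) tF - max (tF - u) 0) := by
    funext u
    simp only [hV, Set.Ioo_inter_Ioo, Real.volume_Ioo]
  have hVmeas : Measurable V := by
    rw [hVeq]
    apply Measurable.ennreal_ofReal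
    exact (((measurable_const.sub measurable_id).min measurable_const).sub
      ((measurable_const.sub measurable_id).max measurable_const))
  have oRmax : ∀ x : ℝ, ENNReal.ofReal (max x 0) = ENNReal.ofReal x := by
    intro x
    rcases le_total x 0 with h | h
    · simp [max_eq_right h, ENNReal.ofReal_of_nonpos h]
    · simp [max_eq_left h]
  have pointwise : ∀ u ∈ Set.Ioi (0:ℝ),
      2 * (ENNReal.ofReal u * ρ u) ≤
        4 * (ENNReal.ofReal (u - δ) * ρ u) + 2 * (ρ u * V u) := by
    intro u hu
    simp only [Set.mem_Ioi] at hu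
    have key : u ≤ 2 * max (u - δ) 0 + max (min (a - u) tF - max (tF - u) 0) 0 := by
      simp only [min_def, max_def]
      split_ifs <;> linarith
    have base : ENNReal.ofReal u ≤ 2 * ENNReal.ofReal (u - δ) + V u := by
      rw [hVeq]
      calc ENNReal.ofReal u
          ≤ ENNReal.ofReal (2 * max (u - δ) 0 + max (min (a - u) tF - max (tF - u) 0) 0) :=
            ENNReal.ofReal_le_ofReal key
        _ = ENNReal.ofReal (2 * max (u - δ) 0) +
              ENNReal.ofReal (max (min (a - u) tF - max (tF - u) 0) 0) :=
            ENNReal.ofReal_add (by positivity) (le_max_right _ _)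
        _ = 2 * ENNReal.ofReal (u - δ) +
              ENNReal.ofReal (min (a - u) tF - max (tF - u) 0) := by
            rw [ENNReal.ofReal_mul (by norm_num), oRmax, oRmax]
            norm_num
    calc 2 * (ENNReal.ofReal u * ρ u) = (2 * ENNReal.ofReal u) * ρ u := by ring
      _ ≤ (2 * (2 * ENNReal.ofReal (u - δ) + V u)) * ρ u := by gcongr
      _ = 4 * (ENNReal.ofReal (u - δ) * ρ u) + 2 * (ρ u * V u) := by ring
  calc 2 * ∫⁻ t in Set.Ioi (0:ℝ), ENNReal.ofReal t * ρ t
      = ∫⁻ u in Set.Ioi (0:ℝ), 2 * (ENNReal.ofReal u * ρ u) :=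
        (lintegral_const_mul 2 (by fun_prop)).symm
    _ ≤ ∫⁻ u in Set.Ioi (0:ℝ),
          (4 * (ENNReal.ofReal (u - δ) * ρ u) + 2 * (ρ u * V u)) :=
        setLIntegral_mono' measurableSet_Ioi pointwise
    _ = 4 * (∫⁻ t in Set.Ioi (0:ℝ), ENNReal.ofReal (t - δ) * ρ t) +
          2 * ∫⁻ u in Set.Ioi (0:ℝ), ρ u * V u := by
        rw [lintegral_add_left (by fun_prop)]
        rw [lintegral_const_mul 4 (by fun_prop), lintegral_const_mul 2 (f := fun u => ρ u * V u) (hρmeas.mul hVmeas)]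
    _ ≤ 4 * (∫⁻ t in Set.Ioi (0:ℝ), ENNReal.ofReal (t - δ) * ρ t) +
          2 * ∫⁻ u, ρ u * V u := by
        gcongr
        exact Measure.restrict_le_self
end

section
/- In the plane, for any segment I and any σ ∈ S^1, if Sσ denotes the reflection (σ_1,σ_2) ↦ (−σ_1,σ_2), and I_t := [−t,t]×{0} is a horizontal segment whose endpoints' first coordinates are ±t, while I joins a point of {t}×R to a point of {−t}×R, then H^1(π_{σ^⊥}(I)) + H^1(π_{(Sσ)^⊥}(I)) ≥ H^1(π_{σ^⊥}(I_t)) + H^1(π_{(Sσ)^⊥}(I_t)), where π_V is orthogonal projection onto the line V. -/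
open MeasureTheory ENNReal Metric
open scoped RealInnerProductSpace

/-- The reflection `(σ₁, σ₂) ↦ (-σ₁, σ₂)` in the plane. -/
noncomputable def reflFirst (v : EuclideanSpace ℝ (Fin 2)) : EuclideanSpace ℝ (Fin 2) :=
  (WithLp.equiv 2 (Fin 2 → ℝ)).symm ![-(v 0), v 1]

/-- Orthogonal projection onto the line `σ^⊥`, for a unit vector `σ`. -/
noncomputable def projOrth (σ x : EuclideanSpace ℝ (Fin 2)) : EuclideanSpace ℝ (Fin 2) :=
  x - ⟪x, σ⟫ • σ

noncomputable def projOrthL (σ : EuclideanSpace ℝ (Fin 2)) :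
    EuclideanSpace ℝ (Fin 2) →ₗ[ℝ] EuclideanSpace ℝ (Fin 2) where
  toFun := projOrth σ
  map_add' x y := by
    simp only [projOrth, inner_add_left, add_smul]; abel
  map_smul' c x := by
    simp only [projOrth, real_inner_smul_left, RingHom.id_apply, smul_sub, smul_smul]

lemma projOrth_image (σ p q : EuclideanSpace ℝ (Fin 2)) :
    projOrth σ '' segment ℝ p q = segment ℝ (projOrth σ p) (projOrth σ q) := by
  have := image_segment ℝ (projOrthL σ).toAffineMap p q
  simpa [projOrthL] using this

lemma hm_seg (σ p q : EuclideanSpace ℝ (Fin 2)) :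
    μH[(1:ℝ)] (projOrth σ '' segment ℝ p q)
      = ENNReal.ofReal ‖projOrth σ (p - q)‖ := by
  rw [projOrth_image, hausdorffMeasure_segment, edist_dist, dist_eq_norm]
  congr 1
  have : projOrth σ p - projOrth σ q = projOrth σ (p - q) := by
    have := (projOrthL σ).map_sub p q
    simpa [projOrthL] using this.symm
  rw [this]

lemma norm_projOrth (σ : EuclideanSpace ℝ (Fin 2)) (hσ : (σ 0)^2 + (σ 1)^2 = 1)
    (x : EuclideanSpace ℝ (Fin 2)) :
    ‖projOrth σ x‖ = |x 0 * σ 1 - x 1 * σ 0| := by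
  have hin : ⟪x, σ⟫ = x 0 * σ 0 + x 1 * σ 1 := by
    simp [PiLp.inner_apply, Fin.sum_univ_two, RCLike.inner_apply, mul_comm]
  have h0 : (projOrth σ x) 0 = x 0 - (x 0 * σ 0 + x 1 * σ 1) * σ 0 := by
    simp [projOrth, hin]
  have h1 : (projOrth σ x) 1 = x 1 - (x 0 * σ 0 + x 1 * σ 1) * σ 1 := by
    simp [projOrth, hin]
  rw [EuclideanSpace.norm_eq]
  rw [Fin.sum_univ_two, h0, h1]
  rw [show √(‖x 0 - (x 0 * σ 0 + x 1 * σ 1) * σ 0‖ ^ 2 + ‖x 1 - (x 0 * σ 0 + x 1 * σ 1) * σ 1‖ ^ 2)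
      = √((x 0 * σ 1 - x 1 * σ 0)^2) by
    congr 1
    rw [Real.norm_eq_abs, Real.norm_eq_abs, sq_abs, sq_abs]
    linear_combination ((x 0 * σ 0 + x 1 * σ 1)^2 - (x 0)^2 - (x 1)^2) * hσ]
  exact Real.sqrt_sq_eq_abs _

/-- Shadow inequality for segments in the plane: if `I` joins `{t}×ℝ` to `{-t}×ℝ` then the sum
    of the lengths of the projections of `I` onto `σ^⊥` and `(Sσ)^⊥` is at least the
    corresponding quantity for the horizontal segment `I_t = [-t,t]×{0}`. -/
theorem segment_shadow_inequality (t : ℝ) (ht : 0 < t)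
    (σ : EuclideanSpace ℝ (Fin 2)) (hσ : σ ∈ sphere (0 : EuclideanSpace ℝ (Fin 2)) 1)
    (p q : EuclideanSpace ℝ (Fin 2)) (hp : p 0 = t) (hq : q 0 = -t) :
    μH[(1 : ℝ)] (projOrth σ ''
        segment ℝ ((WithLp.equiv 2 (Fin 2 → ℝ)).symm ![-t, 0])
          ((WithLp.equiv 2 (Fin 2 → ℝ)).symm ![t, 0])) +
      μH[(1 : ℝ)] (projOrth (reflFirst σ) ''
        segment ℝ ((WithLp.equiv 2 (Fin 2 → ℝ)).symm ![-t, 0])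
          ((WithLp.equiv 2 (Fin 2 → ℝ)).symm ![t, 0])) ≤
    μH[(1 : ℝ)] (projOrth σ '' segment ℝ p q) +
      μH[(1 : ℝ)] (projOrth (reflFirst σ) '' segment ℝ p q) := by
  set c := σ 0 with hc
  set s := σ 1 with hs
  have hσn : ‖σ‖ = 1 := by simpa using mem_sphere_zero_iff_norm.mp hσ
  have hcs : c ^ 2 + s ^ 2 = 1 := by
    have h := real_inner_self_eq_norm_sq σ
    rw [hσn] at h
    have : ⟪σ, σ⟫ = c * c + s * s := by
      simp only [PiLp.inner_apply, Fin.sum_univ_two, RCLike.inner_apply, conj_trivial, hc, hs]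
    nlinarith [this, h]
  have hr0 : (reflFirst σ) 0 = -c := by simp [reflFirst, hc]
  have hr1 : (reflFirst σ) 1 = s := by simp [reflFirst, hs]
  have hrcs : ((reflFirst σ) 0) ^ 2 + ((reflFirst σ) 1) ^ 2 = 1 := by
    rw [hr0, hr1]; nlinarith [hcs]
  set a : EuclideanSpace ℝ (Fin 2) := (WithLp.equiv 2 (Fin 2 → ℝ)).symm ![-t, 0] with ha
  set b : EuclideanSpace ℝ (Fin 2) := (WithLp.equiv 2 (Fin 2 → ℝ)).symm ![t, 0] with hb
  have hab0 : (a - b) 0 = -(2 * t) := by simp [ha, hb]; ring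
  have hab1 : (a - b) 1 = 0 := by simp [ha, hb]
  have hpq0 : (p - q) 0 = 2 * t := by simp [hp, hq]; ring
  set u := (p - q) 1 with hu
  rw [hm_seg, hm_seg, hm_seg, hm_seg,
    norm_projOrth σ hcs, norm_projOrth σ hcs,
    norm_projOrth (reflFirst σ) hrcs, norm_projOrth (reflFirst σ) hrcs,
    hab0, hab1, hpq0, hr0, hr1, ← hu]
  rw [← ENNReal.ofReal_add (abs_nonneg _) (abs_nonneg _),
    ← ENNReal.ofReal_add (abs_nonneg _) (abs_nonneg _)]
  apply ENNReal.ofReal_le_ofReal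
  have h1 : |(-(2 * t)) * s - 0 * c| = |2 * t * s| := by
    rw [show (-(2 * t)) * s - 0 * c = -(2 * t * s) by ring, abs_neg]
  have h2 : |(-(2 * t)) * s - 0 * (-c)| = |2 * t * s| := by
    rw [show (-(2 * t)) * s - 0 * (-c) = -(2 * t * s) by ring, abs_neg]
  rw [h1, h2]
  have key := abs_add_le (2 * t * s - u * c) (2 * t * s - u * (-c))
  rw [show 2 * t * s - u * c + (2 * t * s - u * (-c)) = 2 * (2 * t * s) by ring,
    abs_mul] at key
  calc |2 * t * s| + |2 * t * s| = |(2:ℝ)| * |2 * t * s| := by rw [abs_two]; ring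
    _ ≤ |2 * t * s - u * c| + |2 * t * s - u * (-c)| := key
end
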